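/- Let f*_M be an optimal solution of MCFF(q+n) on F(Ā,B̄,c) with optimal cost c*. Then I_{f*_M} is an optimal solution of the minimum cost constrained input selection problem, i.e., (Ā, B̄_{I_{f*_M}}) is structurally controllable and for every W ⊆ {1,…,m} with (Ā,B̄_W) structurally controllable, p(I_{f*_M}) ≤ p(W). Consequently the optimal costs coincide: p* = c*. -/

import Mathlib

open scoped Classical

/-- Vertices of the flow network `F(Ā,B̄)` of Algorithm 1: source `s`, sink `t`,
one vertex `N i` per non-top-linked SCC, right copies `xp k` of states, states
`x r`, inputs `u j`, and input copies `up j`. -/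
inductive FV (n m q : ℕ) : Type
  | s : FV n m q
  | t : FV n m q
  | N : Fin q → FV n m q
  | xp : Fin n → FV n m q
  | x : Fin n → FV n m q
  | u : Fin m → FV n m q
  | up : Fin m → FV n m q
  deriving DecidableEq, Fintype

variable {n m q : ℕ}

/-- Capacities of the flow network `F(Ā,B̄)`: all edges have capacity `1`,
except the edges `(u'_j, t)` which have capacity `n+1`; non-edges have
capacity `0`. `memN i r` says state `x_r` belongs to the non-top-linked SCC
`N_i`. -/
noncomputable def cap (A : Fin n → Fin n → Bool) (B : Fin n → Fin m → Bool)
    (memN : Fin q → Fin n → Bool) : FV n m q → FV n m q → ℕ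
  | FV.s, FV.N _ => 1
  | FV.s, FV.xp _ => 1
  | FV.N i, FV.up j => if ∃ r : Fin n, memN i r = true ∧ B r j = true then 1 else 0
  | FV.xp k, FV.x r => if A k r = true then 1 else 0
  | FV.xp k, FV.u j => if B k j = true then 1 else 0
  | FV.u j, FV.up j' => if j = j' then 1 else 0
  | FV.up _, FV.t => n + 1
  | FV.x _, FV.t => 1
  | _, _ => 0

/-- A feasible flow vector on `F(Ā,B̄)`: nonnegative, capacity-respecting, and
conserving flow at every vertex other than `s` and `t`. -/
def Feasible (b : FV n m q → FV n m q → ℕ) (f : FV n m q → FV n m q → ℝ) : Prop :=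
  (∀ a c, 0 ≤ f a c) ∧ (∀ a c, f a c ≤ (b a c : ℝ)) ∧
    ∀ v : FV n m q, v ≠ FV.s → v ≠ FV.t → ∑ a, f a v = ∑ c, f v c

/-- Value of a flow: total flow out of the source. -/
noncomputable def value (f : FV n m q → FV n m q → ℝ) : ℝ := ∑ v, f FV.s v

/-- Edge relation of the system bipartite graph `B(Ā,B̄)`. -/
def bipE (A : Fin n → Fin n → Bool) (B : Fin n → Fin m → Bool) :
    Fin n ⊕ Fin m → Fin n → Prop
  | Sum.inl r, k => A k r = true
  | Sum.inr j, k => B k j = true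

/-- Structural controllability of `(Ā,B̄)` (characterization used throughout the
paper): every non-top-linked SCC `N_i` receives an edge from some input, and
`B(Ā,B̄)` has a matching saturating the right vertices `x'₁,…,x'ₙ`. -/
def SCchar (A : Fin n → Fin n → Bool) (B : Fin n → Fin m → Bool)
    (memN : Fin q → Fin n → Bool) : Prop :=
  (∀ i : Fin q, ∃ j : Fin m, ∃ r : Fin n, memN i r = true ∧ B r j = true) ∧
    ∃ M : Fin n → Fin n ⊕ Fin m, Function.Injective M ∧ ∀ k : Fin n, bipE A B (M k) k

/-- Edge costs on `F(Ā,B̄,c)`: the edge `(u'_j, t)` has cost `p j`, all other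
edges have cost `0`. -/
def cost (p : Fin m → ℝ) : FV n m q → FV n m q → ℝ
  | FV.up j, FV.t => p j
  | _, _ => 0

/-- Fixed-flow cost of a flow `f`: the sum of the costs of the edges carrying
positive flow, `c_f = Σ_{e : f(e) > 0} c(e)`. -/
noncomputable def fixedCost (p : Fin m → ℝ) (f : FV n m q → FV n m q → ℝ) : ℝ :=
  ∑ a : FV n m q, ∑ c : FV n m q, if 0 < f a c then cost p a c else 0

open Finset in
def FVequiv (n m q : ℕ) :
    (Unit ⊕ Unit ⊕ Fin q ⊕ Fin n ⊕ Fin n ⊕ Fin m ⊕ Fin m) ≃ FV n m q where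
  toFun v := match v with
    | .inl _ => .s
    | .inr (.inl _) => .t
    | .inr (.inr (.inl i)) => .N i
    | .inr (.inr (.inr (.inl k))) => .xp k
    | .inr (.inr (.inr (.inr (.inl r)))) => .x r
    | .inr (.inr (.inr (.inr (.inr (.inl j))))) => .u j
    | .inr (.inr (.inr (.inr (.inr (.inr j))))) => .up j
  invFun v := match v with
    | .s => .inl ()
    | .t => .inr (.inl ())
    | .N i => .inr (.inr (.inl i))
    | .xp k => .inr (.inr (.inr (.inl k)))
    | .x r => .inr (.inr (.inr (.inr (.inl r))))
    | .u j => .inr (.inr (.inr (.inr (.inr (.inl j)))))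
    | .up j => .inr (.inr (.inr (.inr (.inr (.inr j)))))
  left_inv := by rintro (_|_|_|_|_|_|_) <;> rfl
  right_inv := by rintro v; cases v <;> rfl

lemma sum_FV (g : FV n m q → ℝ) :
    ∑ v, g v = g .s + g .t + ((∑ i, g (.N i)) + ((∑ k, g (.xp k)) +
      ((∑ r, g (.x r)) + ((∑ j, g (.u j)) + ∑ j, g (.up j))))) := by
  rw [← Equiv.sum_comp (FVequiv n m q) g]
  simp [Fintype.sum_sum_type, FVequiv, add_assoc]

lemma fixedCost_eq (p : Fin m → ℝ) (f : FV n m q → FV n m q → ℝ) :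
    fixedCost p f = ∑ j, if 0 < f (FV.up j) FV.t then p j else 0 := by
  unfold fixedCost
  rw [sum_FV (fun a => ∑ c, if 0 < f a c then cost p a c else 0)]
  have h0 : ∀ a : FV n m q, (∀ c, cost p a c = 0) →
      (∑ c, if 0 < f a c then cost p a c else 0) = 0 := by
    intro a ha
    refine Finset.sum_eq_zero fun c _ => ?_
    rw [ha c]; simp
  have hup : ∀ j : Fin m, (∑ c, if 0 < f (FV.up j) c then cost p (FV.up j) c else 0)
      = if 0 < f (FV.up j) FV.t then p j else 0 := by
    intro j
    rw [sum_FV (fun c => if 0 < f (FV.up j) c then cost p (FV.up j) c else 0)]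
    simp [cost]
  rw [h0 .s (by intro c; cases c <;> simp [cost]),
      h0 .t (by intro c; cases c <;> simp [cost])]
  rw [Finset.sum_eq_zero (fun i _ => h0 (.N i) (by intro c; cases c <;> simp [cost])),
      Finset.sum_eq_zero (fun k _ => h0 (.xp k) (by intro c; cases c <;> simp [cost])),
      Finset.sum_eq_zero (fun r _ => h0 (.x r) (by intro c; cases c <;> simp [cost])),
      Finset.sum_eq_zero (fun j _ => h0 (.u j) (by intro c; cases c <;> simp [cost]))]
  simp [hup]
section
variable {A : Fin n → Fin n → Bool} {B : Fin n → Fin m → Bool} {memN : Fin q → Fin n → Bool}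
  {f : FV n m q → FV n m q → ℝ}

lemma fz (hf : Feasible (cap A B memN) f) (a c : FV n m q) (h : cap A B memN a c = 0) :
    f a c = 0 := le_antisymm (by simpa [h] using hf.2.1 a c) (hf.1 a c)

lemma inflow_N (hf : Feasible (cap A B memN) f) (i : Fin q) :
    ∑ a, f a (FV.N i) = f FV.s (FV.N i) := by
  rw [sum_FV (fun a => f a (FV.N i))]; simp [fz hf, cap.eq_def]

lemma outflow_N (hf : Feasible (cap A B memN) f) (i : Fin q) :
    ∑ c, f (FV.N i) c = ∑ j, f (FV.N i) (FV.up j) := by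
  rw [sum_FV (fun c => f (FV.N i) c)]; simp [fz hf, cap.eq_def]

lemma inflow_xp (hf : Feasible (cap A B memN) f) (k : Fin n) :
    ∑ a, f a (FV.xp k) = f FV.s (FV.xp k) := by
  rw [sum_FV (fun a => f a (FV.xp k))]; simp [fz hf, cap.eq_def]

lemma outflow_xp (hf : Feasible (cap A B memN) f) (k : Fin n) :
    ∑ c, f (FV.xp k) c = (∑ r, f (FV.xp k) (FV.x r)) + ∑ j, f (FV.xp k) (FV.u j) := by
  rw [sum_FV (fun c => f (FV.xp k) c)]; simp [fz hf, cap.eq_def]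

lemma inflow_x (hf : Feasible (cap A B memN) f) (r : Fin n) :
    ∑ a, f a (FV.x r) = ∑ k, f (FV.xp k) (FV.x r) := by
  rw [sum_FV (fun a => f a (FV.x r))]; simp [fz hf, cap.eq_def]

lemma outflow_x (hf : Feasible (cap A B memN) f) (r : Fin n) :
    ∑ c, f (FV.x r) c = f (FV.x r) FV.t := by
  rw [sum_FV (fun c => f (FV.x r) c)]; simp [fz hf, cap.eq_def]

lemma inflow_u (hf : Feasible (cap A B memN) f) (j : Fin m) :
    ∑ a, f a (FV.u j) = ∑ k, f (FV.xp k) (FV.u j) := by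
  rw [sum_FV (fun a => f a (FV.u j))]; simp [fz hf, cap.eq_def]

lemma outflow_u (hf : Feasible (cap A B memN) f) (j : Fin m) :
    ∑ c, f (FV.u j) c = f (FV.u j) (FV.up j) := by
  rw [sum_FV (fun c => f (FV.u j) c)]
  have hz : ∀ j' : Fin m, j' ≠ j → f (FV.u j) (FV.up j') = 0 := fun j' hj' =>
    fz hf _ _ (by simp [cap]; exact fun h => absurd h.symm hj')
  rw [Finset.sum_eq_single j (fun j' _ h => hz j' h) (by simp)]
  simp [fz hf, cap.eq_def]

lemma inflow_up (hf : Feasible (cap A B memN) f) (j : Fin m) :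
    ∑ a, f a (FV.up j) = (∑ i, f (FV.N i) (FV.up j)) + f (FV.u j) (FV.up j) := by
  rw [sum_FV (fun a => f a (FV.up j))]
  have hz : ∀ j' : Fin m, j' ≠ j → f (FV.u j') (FV.up j) = 0 := fun j' hj' =>
    fz hf _ _ (by simp [cap]; exact fun h => absurd h hj')
  rw [Finset.sum_eq_single j (fun j' _ h => hz j' h) (by simp)]
  simp [fz hf, cap.eq_def]

lemma outflow_up (hf : Feasible (cap A B memN) f) (j : Fin m) :
    ∑ c, f (FV.up j) c = f (FV.up j) FV.t := by
  rw [sum_FV (fun c => f (FV.up j) c)]; simp [fz hf, cap.eq_def]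

lemma value_eq (hf : Feasible (cap A B memN) f) :
    value f = (∑ i, f FV.s (FV.N i)) + ∑ k, f FV.s (FV.xp k) := by
  unfold value
  rw [sum_FV (fun c => f FV.s c)]; simp [fz hf, cap.eq_def]

lemma all_eq_one {ι : Type*} [Fintype ι] {g : ι → ℝ} (hle : ∀ i, g i ≤ 1)
    (hsum : (Fintype.card ι : ℝ) ≤ ∑ i, g i) : ∀ i, g i = 1 := by
  by_contra h
  push_neg at h
  obtain ⟨i0, hi0⟩ := h
  have hlt : ∑ i, g i < ∑ _i : ι, (1 : ℝ) :=
    Finset.sum_lt_sum (fun i _ => hle i)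
      ⟨i0, Finset.mem_univ _, lt_of_le_of_ne (hle i0) hi0⟩
  rw [Finset.sum_const, Finset.card_univ, nsmul_eq_mul, mul_one] at hlt
  linarith

lemma sat_N (hf : Feasible (cap A B memN) f) (hval : ((q : ℝ) + n) ≤ value f) :
    (∀ i : Fin q, f FV.s (FV.N i) = 1) ∧ ∀ k : Fin n, f FV.s (FV.xp k) = 1 := by
  have h1 : ∀ i : Fin q, f FV.s (FV.N i) ≤ 1 := fun i => by
    simpa [cap] using hf.2.1 FV.s (FV.N i)
  have h2 : ∀ k : Fin n, f FV.s (FV.xp k) ≤ 1 := fun k => by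
    simpa [cap] using hf.2.1 FV.s (FV.xp k)
  have hS1 : ∑ i, f FV.s (FV.N i) ≤ (q : ℝ) := by
    calc ∑ i, f FV.s (FV.N i) ≤ ∑ _i : Fin q, (1 : ℝ) :=
          Finset.sum_le_sum fun i _ => h1 i
      _ = q := by simp
  have hS2 : ∑ k, f FV.s (FV.xp k) ≤ (n : ℝ) := by
    calc ∑ k, f FV.s (FV.xp k) ≤ ∑ _k : Fin n, (1 : ℝ) :=
          Finset.sum_le_sum fun k _ => h2 k
      _ = n := by simp
  rw [value_eq hf] at hval
  constructor
  · exact all_eq_one h1 (by simp only [Fintype.card_fin]; linarith)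
  · exact all_eq_one h2 (by simp only [Fintype.card_fin]; linarith)

end
section
variable {A : Fin n → Fin n → Bool} {B : Fin n → Fin m → Bool} {memN : Fin q → Fin n → Bool}
  {f : FV n m q → FV n m q → ℝ}

lemma up_t (hf : Feasible (cap A B memN) f) (j : Fin m) :
    f (FV.up j) FV.t = (∑ i, f (FV.N i) (FV.up j)) + f (FV.u j) (FV.up j) := by
  have h := hf.2.2 (FV.up j) (by simp) (by simp)
  rw [inflow_up hf, outflow_up hf] at h
  linarith

lemma cap_pos_of_f_pos (hf : Feasible (cap A B memN) f) {a c : FV n m q}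
    (h : 0 < f a c) : cap A B memN a c ≠ 0 := by
  intro h0
  have := fz hf a c h0
  linarith

lemma scchar_of_flow (hf : Feasible (cap A B memN) f) (hval : ((q : ℝ) + n) ≤ value f) :
    SCchar A (fun r j => B r j && decide (0 < f (FV.up j) FV.t)) memN := by
  obtain ⟨hsN, hsxp⟩ := sat_N hf hval
  -- positivity of sink-edge flow from any inflow into `up j`
  have hupN : ∀ (i : Fin q) (j : Fin m), 0 < f (FV.N i) (FV.up j) →
      0 < f (FV.up j) FV.t := by
    intro i j hij
    rw [up_t hf j]
    have h1 : f (FV.N i) (FV.up j) ≤ ∑ i', f (FV.N i') (FV.up j) :=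
      Finset.single_le_sum (fun i' _ => hf.1 _ _) (Finset.mem_univ i)
    have h2 := hf.1 (FV.u j) (FV.up j)
    linarith
  have hupu : ∀ (k : Fin n) (j : Fin m), 0 < f (FV.xp k) (FV.u j) →
      0 < f (FV.up j) FV.t := by
    intro k j hkj
    have hc := hf.2.2 (FV.u j) (by simp) (by simp)
    rw [inflow_u hf, outflow_u hf] at hc
    have h1 : f (FV.xp k) (FV.u j) ≤ ∑ k', f (FV.xp k') (FV.u j) :=
      Finset.single_le_sum (fun k' _ => hf.1 _ _) (Finset.mem_univ k)
    rw [up_t hf j]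
    have h2 : (0:ℝ) ≤ ∑ i, f (FV.N i) (FV.up j) :=
      Finset.sum_nonneg fun i _ => hf.1 _ _
    linarith
  constructor
  · -- every non-top-linked SCC is covered
    intro i
    have hcons := hf.2.2 (FV.N i) (by simp) (by simp)
    rw [inflow_N hf, outflow_N hf, hsN i] at hcons
    have hex : ∃ j, 0 < f (FV.N i) (FV.up j) := by
      by_contra hc
      push_neg at hc
      have : ∑ j, f (FV.N i) (FV.up j) ≤ 0 := Finset.sum_nonpos fun j _ => hc j
      linarith
    obtain ⟨j, hj⟩ := hex
    have hcap := cap_pos_of_f_pos hf hj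
    have hex2 : ∃ r : Fin n, memN i r = true ∧ B r j = true := by
      by_contra hc
      exact hcap (by simp [cap, hc])
    obtain ⟨r, hr1, hr2⟩ := hex2
    exact ⟨j, r, hr1, by simp [hr2, hupN i j hj]⟩
  · -- matching via Hall's theorem
    set tset : Fin n → Finset (Fin n ⊕ Fin m) :=
      fun k => Finset.univ.filter (fun v => 0 < f (FV.xp k) (Sum.elim FV.x FV.u v)) with htset
    have key : ∀ v : Fin n ⊕ Fin m, ∑ k, f (FV.xp k) (Sum.elim FV.x FV.u v) ≤ 1 := by
      rintro (r | j)
      · have h := hf.2.2 (FV.x r) (by simp) (by simp)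
        rw [inflow_x hf, outflow_x hf] at h
        have hle := hf.2.1 (FV.x r) FV.t
        simp only [cap] at hle
        simpa [h] using hle
      · have h := hf.2.2 (FV.u j) (by simp) (by simp)
        rw [inflow_u hf, outflow_u hf] at h
        have hle := hf.2.1 (FV.u j) (FV.up j)
        simp only [cap, if_pos rfl] at hle
        simpa [h] using hle
    have hall : ∀ S : Finset (Fin n), S.card ≤ (S.biUnion tset).card := by
      intro S
      have hrow : ∀ k : Fin n, ∑ v : Fin n ⊕ Fin m, f (FV.xp k) (Sum.elim FV.x FV.u v) = 1 := by
        intro k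
        have h := hf.2.2 (FV.xp k) (by simp) (by simp)
        rw [inflow_xp hf, outflow_xp hf, hsxp k] at h
        rw [Fintype.sum_sum_type]
        simpa using h.symm
      have hcard : (S.card : ℝ) =
          ∑ v : Fin n ⊕ Fin m, ∑ k ∈ S, f (FV.xp k) (Sum.elim FV.x FV.u v) := by
        rw [Finset.sum_comm]
        rw [Finset.sum_congr rfl (fun k _ => hrow k)]
        simp
      have hrestrict : ∑ v : Fin n ⊕ Fin m, ∑ k ∈ S, f (FV.xp k) (Sum.elim FV.x FV.u v)
          = ∑ v ∈ S.biUnion tset, ∑ k ∈ S, f (FV.xp k) (Sum.elim FV.x FV.u v) := by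
        refine (Finset.sum_subset (Finset.subset_univ _) ?_).symm
        intro v _ hv
        refine Finset.sum_eq_zero fun k hk => ?_
        by_contra hne
        have hpos : 0 < f (FV.xp k) (Sum.elim FV.x FV.u v) :=
          lt_of_le_of_ne (hf.1 _ _) (Ne.symm hne)
        exact hv (Finset.mem_biUnion.mpr ⟨k, hk, by simp [htset, hpos]⟩)
      have hle : ((S.card : ℝ)) ≤ ((S.biUnion tset).card : ℝ) := by
        rw [hcard, hrestrict]
        calc ∑ v ∈ S.biUnion tset, ∑ k ∈ S, f (FV.xp k) (Sum.elim FV.x FV.u v)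
            ≤ ∑ _v ∈ S.biUnion tset, (1:ℝ) := by
              refine Finset.sum_le_sum fun v _ => ?_
              calc ∑ k ∈ S, f (FV.xp k) (Sum.elim FV.x FV.u v)
                  ≤ ∑ k, f (FV.xp k) (Sum.elim FV.x FV.u v) :=
                    Finset.sum_le_sum_of_subset_of_nonneg (Finset.subset_univ _)
                      (fun k _ _ => hf.1 _ _)
                _ ≤ 1 := key v
          _ = ((S.biUnion tset).card : ℝ) := by simp
      exact_mod_cast hle
    obtain ⟨M, hMinj, hMt⟩ :=
      (Finset.all_card_le_biUnion_card_iff_exists_injective tset).mp hall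
    refine ⟨M, hMinj, fun k => ?_⟩
    have hk := hMt k
    rw [htset, Finset.mem_filter] at hk
    rcases hM : M k with r | j
    · rw [hM] at hk
      simp only [Sum.elim_inl] at hk
      have hcap := cap_pos_of_f_pos hf hk.2
      have hA : A k r = true := by
        by_contra hc
        exact hcap (by simp [cap, hc])
      simpa [bipE] using hA
    · rw [hM] at hk
      simp only [Sum.elim_inr] at hk
      have hcap := cap_pos_of_f_pos hf hk.2
      have hB : B k j = true := by
        by_contra hc
        exact hcap (by simp [cap, hc])
      simp [bipE, hB, hupu k j hk.2]

end
/-- The flow constructed from a covering input choice `ji` and a matching `M`. -/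
noncomputable def gflow (ji : Fin q → Fin m) (M : Fin n → Fin n ⊕ Fin m) :
    FV n m q → FV n m q → ℝ
  | FV.s, FV.N _ => 1
  | FV.s, FV.xp _ => 1
  | FV.N i, FV.up j => if ji i = j then 1 else 0
  | FV.xp k, FV.x r => if M k = Sum.inl r then 1 else 0
  | FV.xp k, FV.u j => if M k = Sum.inr j then 1 else 0
  | FV.x r, FV.t => if ∃ k, M k = Sum.inl r then 1 else 0
  | FV.u j, FV.up j' => if j = j' ∧ ∃ k, M k = Sum.inr j then 1 else 0
  | FV.up j, FV.t => ((Finset.univ.filter (fun i : Fin q => ji i = j)).card : ℝ) +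
      (if ∃ k, M k = Sum.inr j then 1 else 0)
  | _, _ => 0

section
variable {A : Fin n → Fin n → Bool} {B : Fin n → Fin m → Bool} {memN : Fin q → Fin n → Bool}
  {W : Finset (Fin m)} {ji : Fin q → Fin m} {M : Fin n → Fin n ⊕ Fin m}

lemma sum_indicator_inj (hMinj : Function.Injective M) (v : Fin n ⊕ Fin m) :
    ∑ k, (if M k = v then (1:ℝ) else 0) = if ∃ k, M k = v then 1 else 0 := by
  by_cases h : ∃ k, M k = v
  · obtain ⟨k0, hk0⟩ := h
    rw [if_pos ⟨k0, hk0⟩, Finset.sum_eq_single k0]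
    · rw [if_pos hk0]
    · intro k _ hk
      exact if_neg fun hkv => hk (hMinj (hkv.trans hk0.symm))
    · simp
  · rw [if_neg h]
    exact Finset.sum_eq_zero fun k _ => if_neg fun hk => h ⟨k, hk⟩

lemma gflow_feasible (hq : q ≤ n)
    (hji : ∀ i, (∃ r, memN i r = true ∧ B r (ji i) = true) ∧ ji i ∈ W)
    (hMinj : Function.Injective M)
    (hM : ∀ k, bipE A (fun r j => B r j && decide (j ∈ W)) (M k) k) :
    Feasible (cap A B memN) (gflow ji M) := by
  refine ⟨?_, ?_, ?_⟩
  · intro a c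
    cases a <;> cases c <;> simp [gflow] <;> positivity
  · intro a c
    cases a <;> cases c <;> simp [gflow, cap]
    case N.up i j =>
      split
      · next h =>
        obtain ⟨⟨r, hr1, hr2⟩, _⟩ := hji i
        rw [← h]
        simp only [if_pos (⟨r, hr1, hr2⟩ : ∃ r, memN i r = true ∧ B r (ji i) = true)]
        norm_num
      · positivity
    case xp.x k r =>
      split
      · next h =>
        have := hM k
        rw [h] at this
        simp only [bipE] at this
        rw [if_pos this]
      · positivity
    case xp.u k j =>
      split
      · next h =>
        have := hM k
        rw [h] at this
        simp only [bipE, Bool.and_eq_true] at this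
        rw [if_pos this.1]
      · positivity
    case u.up j j' =>
      split
      · next h => simp [h.1]
      · positivity
    case x.t r => split <;> norm_num
    case up.t j =>
      have hcard : ((Finset.univ.filter (fun i : Fin q => ji i = j)).card : ℝ) ≤ n := by
        have h := le_trans (le_trans (Finset.card_filter_le Finset.univ
          (fun i : Fin q => ji i = j)) (by simp)) hq
        exact_mod_cast h
      split <;> linarith
  · intro v hvs hvt
    cases v with
    | s => exact absurd rfl hvs
    | t => exact absurd rfl hvt
    | N i =>
        rw [sum_FV (fun a => gflow ji M a (FV.N i)), sum_FV (fun c => gflow ji M (FV.N i) c)]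
        simp [gflow, Finset.sum_ite_eq]
    | xp k =>
        rw [sum_FV (fun a => gflow ji M a (FV.xp k)), sum_FV (fun c => gflow ji M (FV.xp k) c)]
        rcases hMk : M k with r0 | j0 <;>
          simp [gflow, hMk, Sum.inl.injEq, Sum.inr.injEq, Finset.sum_ite_eq]
    | x r =>
        rw [sum_FV (fun a => gflow ji M a (FV.x r)), sum_FV (fun c => gflow ji M (FV.x r) c)]
        simp only [gflow]
        rw [sum_indicator_inj hMinj (Sum.inl r)]
        simp
    | u j =>
        rw [sum_FV (fun a => gflow ji M a (FV.u j)), sum_FV (fun c => gflow ji M (FV.u j) c)]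
        simp only [gflow]
        rw [sum_indicator_inj hMinj (Sum.inr j)]
        simp [ite_and, Finset.sum_ite_eq]
    | up j =>
        rw [sum_FV (fun a => gflow ji M a (FV.up j)), sum_FV (fun c => gflow ji M (FV.up j) c)]
        simp only [gflow]
        have h2 : ∑ j' : Fin m, (if j' = j ∧ ∃ k, M k = Sum.inr j' then (1:ℝ) else 0)
            = if ∃ k, M k = Sum.inr j then 1 else 0 := by
          rw [Finset.sum_eq_single j (fun j' _ hne => if_neg (fun h => hne h.1)) (by simp)]
          by_cases h : ∃ k, M k = Sum.inr j
          · rw [if_pos ⟨rfl, h⟩, if_pos h]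
          · rw [if_neg (fun hc => h hc.2), if_neg h]
        rw [h2, Finset.sum_boole]
        simp

lemma gflow_value : value (gflow ji M : FV n m q → FV n m q → ℝ) = (q : ℝ) + n := by
  unfold value
  rw [sum_FV (fun c => gflow ji M FV.s c)]
  simp [gflow]

lemma gflow_cost_le (p : Fin m → ℝ) (hp : ∀ j, 0 ≤ p j)
    (hji : ∀ i, (∃ r, memN i r = true ∧ B r (ji i) = true) ∧ ji i ∈ W)
    (hM : ∀ k, bipE A (fun r j => B r j && decide (j ∈ W)) (M k) k) :
    fixedCost p (gflow ji M : FV n m q → FV n m q → ℝ) ≤ ∑ j ∈ W, p j := by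
  rw [fixedCost_eq]
  have hmem : ∀ j : Fin m, 0 < gflow ji M (FV.up j) FV.t → j ∈ W := by
    intro j hpos
    simp only [gflow] at hpos
    by_cases hcard : 0 < (Finset.univ.filter (fun i : Fin q => ji i = j)).card
    · obtain ⟨i, hi⟩ := Finset.card_pos.mp hcard
      rw [Finset.mem_filter] at hi
      rw [← hi.2]
      exact (hji i).2
    · have h0 : (Finset.univ.filter (fun i : Fin q => ji i = j)).card = 0 :=
        Nat.eq_zero_of_not_pos hcard
      rw [h0] at hpos
      have hex : ∃ k, M k = Sum.inr j := by
        by_contra hc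
        rw [if_neg hc] at hpos
        norm_num at hpos
      obtain ⟨k, hk⟩ := hex
      have := hM k
      rw [hk] at this
      simp only [bipE, Bool.and_eq_true, decide_eq_true_eq] at this
      exact this.2
  calc ∑ j, (if 0 < gflow ji M (FV.up j) FV.t then p j else 0)
      ≤ ∑ j, (if j ∈ W then p j else 0) := by
        refine Finset.sum_le_sum fun j _ => ?_
        split
        · next h => rw [if_pos (hmem j h)]
        · split
          · exact hp j
          · exact le_refl 0
    _ = ∑ j ∈ W, p j := by
        rw [Finset.sum_ite_mem]
        simp

end

/-- Theorem 2. Let `f` be an optimal solution of `MCFF(q+n)`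
on `F(Ā,B̄,c)` (a feasible flow of value at least `q+n` with minimal fixed-flow
cost `c* = c_f`). Then `I_f = {j : f((u'_j,t)) > 0}` is an optimal solution of
the minimum cost constrained input selection problem: `(Ā, B̄_{I_f})` is
structurally controllable, and for every input set `W` with `(Ā,B̄_W)`
structurally controllable we have `p(I_f) ≤ p(W)`. Consequently the optimal
costs coincide: `p* = p(I_f) = c_f = c*`. -/
theorem stmt14 (A : Fin n → Fin n → Bool) (B : Fin n → Fin m → Bool)
    (memN : Fin q → Fin n → Bool) (hq : q ≤ n)
    (p : Fin m → ℝ) (hp : ∀ j : Fin m, 0 ≤ p j)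
    (f : FV n m q → FV n m q → ℝ) (hf : Feasible (cap A B memN) f)
    (hval : ((q : ℝ) + n) ≤ value f)
    (hopt : ∀ g : FV n m q → FV n m q → ℝ, Feasible (cap A B memN) g →
      ((q : ℝ) + n) ≤ value g → fixedCost p f ≤ fixedCost p g) :
    SCchar A (fun r j => B r j && decide (0 < f (FV.up j) FV.t)) memN ∧
      (∀ W : Finset (Fin m),
        SCchar A (fun r j => B r j && decide (j ∈ W)) memN →
          ∑ j ∈ Finset.univ.filter (fun j : Fin m => 0 < f (FV.up j) FV.t), p j
            ≤ ∑ j ∈ W, p j) ∧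
      ∑ j ∈ Finset.univ.filter (fun j : Fin m => 0 < f (FV.up j) FV.t), p j
        = fixedCost p f := by
  have hpart3 : (∑ j ∈ Finset.univ.filter (fun j : Fin m => 0 < f (FV.up j) FV.t), p j)
      = fixedCost p f := by
    rw [fixedCost_eq, Finset.sum_filter]
  refine ⟨scchar_of_flow hf hval, fun W hW => ?_, hpart3⟩
  obtain ⟨hcov, M, hMinj, hMedge⟩ := hW
  choose jf rf hr1 hr2 using hcov
  have hji : ∀ i, (∃ r, memN i r = true ∧ B r (jf i) = true) ∧ jf i ∈ W := by
    intro i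
    have h := hr2 i
    simp only [Bool.and_eq_true, decide_eq_true_eq] at h
    exact ⟨⟨rf i, hr1 i, h.1⟩, h.2⟩
  have hfeas := gflow_feasible (A := A) hq hji hMinj hMedge
  have hv : ((q : ℝ) + n) ≤ value (gflow jf M) := le_of_eq gflow_value.symm
  have h1 := hopt _ hfeas hv
  have h2 := gflow_cost_le (A := A) (memN := memN) p hp hji hMedge
  rw [hpart3]
  linarith
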